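/- The center of R = F₂(t)[x;σ] equals F₂(s)[x³]: an element of R is central if and only if it can be written as a finite sum Σᵢ aᵢ·x^{3i} where every coefficient aᵢ lies in the subfield F₂(s) of F₂(t) generated by s = (t³+t+1)/(t²+t). -/

import Mathlib

set_option maxHeartbeats 1000000
set_option synthInstance.maxHeartbeats 400000


noncomputable section

/-- Left multiplication by the skew variable `x` of the Ore extension `F[x;σ]`
(with zero derivation), as an additive endomorphism of the space `ℕ →₀ F` of
coefficient sequences: it twists all coefficients by `σ` and shifts degrees up by one. -/
def OreX {F : Type*} [Field F] (σ : F →+* F) : AddMonoid.End (ℕ →₀ F) :=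
  (Finsupp.mapDomain.addMonoidHom (· + 1)).comp
    (Finsupp.mapRange.addMonoidHom σ.toAddMonoidHom)

/-- The skew (Ore) polynomial ring `F[x;σ]` with zero derivation, realized concretely
(via its faithful left regular representation) as the subring of `AddMonoid.End (ℕ →₀ F)`
generated by the left multiplications by constants together with left multiplication
by `x`.  Its elements are exactly the maps `∑ i, aᵢ σⁱ(·) xⁱ`, and inside it the
defining commutation rule `x * a = σ a * x` holds. -/
def OreRing {F : Type*} [Field F] (σ : F →+* F) : Subring (AddMonoid.End (ℕ →₀ F)) :=
  Subring.closure (Set.range (Module.toAddMonoidEnd F (ℕ →₀ F)) ∪ {OreX σ})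

/-- The embedding of the coefficient field `F` into the skew polynomial ring `F[x;σ]`. -/
def OreC {F : Type*} [Field F] (σ : F →+* F) : F →+* OreRing σ :=
  (Module.toAddMonoidEnd F (ℕ →₀ F)).codRestrict (OreRing σ) fun a =>
    Subring.subset_closure (Or.inl ⟨a, rfl⟩)

/-- The skew variable `x` of the skew polynomial ring `F[x;σ]`. -/
def Orex {F : Type*} [Field F] (σ : F →+* F) : OreRing σ :=
  ⟨OreX σ, Subring.subset_closure (Or.inr rfl)⟩

notation "FF" => RatFunc (ZMod 2)

lemma Xne : (RatFunc.X : FF) ≠ 0 := RatFunc.X_ne_zero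

lemma X1ne : (RatFunc.X + 1 : FF) ≠ 0 := by
  have h : (RatFunc.X + 1 : FF) = algebraMap (Polynomial (ZMod 2)) FF (Polynomial.X + 1) := by
    simp [RatFunc.algebraMap_X]
  rw [h, ne_eq, map_eq_zero_iff _ (IsFractionRing.injective _ _)]
  intro hc
  have := congrArg (fun p => Polynomial.coeff p 1) hc
  simp [Polynomial.coeff_one] at this

lemma two_eq_zero : (2 : FF) = 0 := by
  have h := map_ofNat (algebraMap (ZMod 2) FF) 2
  have h2 : ((2 : ZMod 2)) = 0 := by decide
  rw [h2, map_zero] at h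
  exact h.symm

lemma sq_ne : (RatFunc.X^2 + RatFunc.X : FF) ≠ 0 := by
  have h : (RatFunc.X^2 + RatFunc.X : FF) = RatFunc.X * (RatFunc.X + 1) := by ring
  rw [h]; exact mul_ne_zero Xne X1ne

lemma XX1ne : (RatFunc.X^2 + RatFunc.X + 1 : FF) ≠ 0 := by
  have h : (RatFunc.X^2 + RatFunc.X + 1 : FF)
      = algebraMap (Polynomial (ZMod 2)) FF (Polynomial.X^2 + Polynomial.X + 1) := by
    simp [RatFunc.algebraMap_X]
  rw [h, ne_eq, map_eq_zero_iff _ (IsFractionRing.injective _ _)]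
  intro hc
  have := congrArg (fun p => Polynomial.coeff p 0) hc
  simp [Polynomial.coeff_one] at this

section Sigma
variable (σ : FF ≃+* FF)
  (hfix : ∀ c : ZMod 2, σ (RatFunc.C c) = RatFunc.C c)
  (hX : σ RatFunc.X = (RatFunc.X + 1) / RatFunc.X)

include hX

lemma hu_eq : σ RatFunc.X * RatFunc.X = RatFunc.X + 1 := by
  rw [hX, div_mul_cancel₀ _ Xne]

lemma u_ne : σ RatFunc.X ≠ 0 := by
  intro h
  have := hu_eq σ hX
  rw [h, zero_mul] at this
  exact X1ne this.symm

lemma hv_eq : σ (σ RatFunc.X) * σ RatFunc.X = σ RatFunc.X + 1 := by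
  have := congrArg σ (hu_eq σ hX)
  simpa [map_mul, map_add, map_one] using this

lemma hv2_eq : σ (σ RatFunc.X) * (RatFunc.X + 1) = 1 := by
  apply mul_right_cancel₀ (u_ne σ hX)
  set u := σ RatFunc.X
  set v := σ u
  have hu : u * RatFunc.X = RatFunc.X + 1 := hu_eq σ hX
  have hv : v * u = u + 1 := hv_eq σ hX
  linear_combination (1 + RatFunc.X) * hv + hu + (1 + RatFunc.X) * two_eq_zero

lemma v_ne : σ (σ RatFunc.X) ≠ 0 := by
  intro h
  have := hv2_eq σ hX
  rw [h, zero_mul] at this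
  exact one_ne_zero this.symm

lemma sigma3_X : σ (σ (σ RatFunc.X)) = RatFunc.X := by
  set u := σ RatFunc.X
  set v := σ u
  set w := σ v
  have hv2 : v * (RatFunc.X + 1) = 1 := hv2_eq σ hX
  have hw : w * v = v + 1 := by
    have := congrArg σ (hv_eq σ hX)
    simpa [map_mul, map_add, map_one] using this
  have key : w * (v * (RatFunc.X + 1)) = RatFunc.X * (v * (RatFunc.X + 1)) := by
    linear_combination (1 + RatFunc.X) * hw + (1 - RatFunc.X) * hv2 + two_eq_zero
  rwa [hv2, mul_one, mul_one] at key

lemma sigma_X_ne : σ RatFunc.X ≠ RatFunc.X := by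
  intro h
  have hu := hu_eq σ hX
  rw [h] at hu
  apply XX1ne
  linear_combination hu + two_eq_zero * (1 + RatFunc.X : FF)

lemma sigma2_X_ne : σ (σ RatFunc.X) ≠ RatFunc.X := by
  intro h
  have hv2 := hv2_eq σ hX
  rw [h] at hv2
  apply XX1ne
  linear_combination hv2 + two_eq_zero * (1 : FF)

include hfix

lemma sigma3_id : ∀ a : FF, σ (σ (σ a)) = a := by
  have : (σ.toRingHom.comp (σ.toRingHom.comp σ.toRingHom)) = RingHom.id FF := by
    apply IsLocalization.ringHom_ext (nonZeroDivisors (Polynomial (ZMod 2))) (S := FF)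
    apply Polynomial.ringHom_ext
    · intro c
      simp [RatFunc.algebraMap_C, hfix]
    · simp [RatFunc.algebraMap_X, sigma3_X σ hX]
  intro a
  exact RingHom.congr_fun this a

end Sigma

section Artin
open IntermediateField
variable (σ : FF ≃+* FF)
  (hfix : ∀ c : ZMod 2, σ (RatFunc.C c) = RatFunc.C c)
  (hX : σ RatFunc.X = (RatFunc.X + 1) / RatFunc.X)
  (s : FF) (hs : s = (RatFunc.X ^ 3 + RatFunc.X + 1) / (RatFunc.X ^ 2 + RatFunc.X))

include hs

lemma s_rel : s * (RatFunc.X^2 + RatFunc.X) = RatFunc.X^3 + RatFunc.X + 1 := by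
  rw [hs, div_mul_cancel₀ _ sq_ne]

include hX

lemma sigma_s : σ s = s := by
  have hrel := s_rel s hs
  have hu : σ RatFunc.X * RatFunc.X = RatFunc.X + 1 := hu_eq σ hX
  have hd : σ (RatFunc.X^2 + RatFunc.X) ≠ 0 := fun h => sq_ne (by
    have := congrArg σ.symm h
    simpa using this)
  have hd' : σ RatFunc.X^2 + σ RatFunc.X ≠ 0 := by
    have : σ (RatFunc.X^2 + RatFunc.X) = σ RatFunc.X^2 + σ RatFunc.X := by
      simp [map_add, map_pow]
    rwa [this] at hd
  rw [hs]
  simp only [map_div₀, map_add, map_pow, map_one]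
  rw [div_eq_div_iff hd' sq_ne]
  set u := σ RatFunc.X
  linear_combination (2 + RatFunc.X - 2*RatFunc.X^2 + u + u*RatFunc.X - u*RatFunc.X^2
      + u^2 + u^2*RatFunc.X) * hu + (1 + 2*RatFunc.X - RatFunc.X^3) * two_eq_zero

include hfix

lemma adjoin_fixed : ∀ a ∈ IntermediateField.adjoin (ZMod 2) {s}, σ a = a := by
  have hC : ∀ c : ZMod 2, σ (algebraMap (ZMod 2) FF c) = algebraMap (ZMod 2) FF c := by
    intro c; rw [RatFunc.algebraMap_eq_C]; exact hfix c
  let Fix : IntermediateField (ZMod 2) FF :=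
    Subfield.toIntermediateField
      { carrier := {a | σ a = a}
        mul_mem' := fun ha hb => by simp_all [map_mul]
        one_mem' := by simp
        add_mem' := fun ha hb => by simp_all [map_add]
        zero_mem' := by simp
        neg_mem' := fun ha => by simp_all [map_neg]
        inv_mem' := fun a ha => by simp_all [map_inv₀] }
      hC
  have hle : IntermediateField.adjoin (ZMod 2) {s} ≤ Fix := by
    apply IntermediateField.adjoin_le_iff.mpr
    intro a ha
    rw [Set.mem_singleton_iff] at ha
    subst ha
    exact sigma_s σ hX _ hs
  exact fun a ha => hle ha

lemma fixed_mem_adjoin : ∀ a : FF, σ a = a → a ∈ IntermediateField.adjoin (ZMod 2) {s} := by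
  classical
  intro a hfa
  set K := IntermediateField.adjoin (ZMod 2) {s} with hK
  have hsK : s ∈ K := IntermediateField.mem_adjoin_simple_self (ZMod 2) s
  -- order of σ
  have h3 : σ ^ 3 = 1 := by
    ext b; exact sigma3_id σ hfix hX b
  have hne : σ ≠ 1 := fun h => sigma_X_ne σ hX (by rw [h]; rfl)
  haveI : Fact (Nat.Prime 3) := ⟨by norm_num⟩
  have hord : orderOf σ = 3 := orderOf_eq_prime h3 hne
  -- the action of Multiplicative (ZMod 3)
  letI : SMul (Multiplicative (ZMod 3)) FF :=
    ⟨fun g b => (σ ^ (Multiplicative.toAdd g).val) b⟩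
  have smul_def : ∀ (g : Multiplicative (ZMod 3)) (b : FF),
      g • b = (σ ^ (Multiplicative.toAdd g).val) b := fun _ _ => rfl
  have hpow_eq : ∀ g h : Multiplicative (ZMod 3),
      σ ^ (Multiplicative.toAdd (g * h)).val
        = σ ^ (Multiplicative.toAdd g).val * σ ^ (Multiplicative.toAdd h).val := by
    intro g h
    rw [← pow_add]
    have h1 : (Multiplicative.toAdd (g * h)).val
        = ((Multiplicative.toAdd g) + (Multiplicative.toAdd h)).val := rfl
    rw [h1, ZMod.val_add]
    have := pow_mod_orderOf σ ((Multiplicative.toAdd g).val + (Multiplicative.toAdd h).val)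
    rw [hord] at this
    exact this
  letI : MulAction (Multiplicative (ZMod 3)) FF :=
    { one_smul := by
        intro b
        rw [smul_def]
        norm_num
      mul_smul := by
        intro g h b
        rw [smul_def, smul_def, smul_def, hpow_eq]
        rfl }
  letI : DistribMulAction (Multiplicative (ZMod 3)) FF :=
    { smul_zero := fun g => map_zero (σ ^ (Multiplicative.toAdd g).val)
      smul_add := fun g => map_add (σ ^ (Multiplicative.toAdd g).val) }
  letI : MulSemiringAction (Multiplicative (ZMod 3)) FF :=
    { smul_one := fun g => map_one (σ ^ (Multiplicative.toAdd g).val)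
      smul_mul := fun g => map_mul (σ ^ (Multiplicative.toAdd g).val) }
  letI : FaithfulSMul (Multiplicative (ZMod 3)) FF :=
    ⟨by
      intro g h hgh
      have hfn : σ ^ (Multiplicative.toAdd g).val = σ ^ (Multiplicative.toAdd h).val := by
        ext b; exact hgh (a := b)
      have hval := pow_injOn_Iio_orderOf (x := σ)
        (by rw [hord]; exact ZMod.val_lt _) (by rw [hord]; exact ZMod.val_lt _) hfn
      have := ZMod.val_injective 3 hval
      exact Multiplicative.toAdd.injective this⟩
  set L := FixedPoints.subfield (Multiplicative (ZMod 3)) FF with hLdef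
  have hrank : Module.finrank L FF = 3 := by
    rw [hLdef, FixedPoints.finrank_eq_card]
    simp
  have hmemL : ∀ b : FF, σ b = b → b ∈ L := by
    intro b hb
    have hpow : ∀ k : ℕ, (σ ^ k) b = b := by
      intro k
      induction k with
      | zero => rfl
      | succ n ih => rw [pow_succ']; show σ ((σ ^ n) b) = b; rw [ih, hb]
    intro g
    exact hpow _
  -- K-algebra structure on L
  letI : Algebra K ↥L := RingHom.toAlgebra
    { toFun := fun x => ⟨(x : FF), hmemL _ (adjoin_fixed σ hfix hX s hs _ x.2)⟩
      map_one' := rfl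
      map_mul' := fun _ _ => rfl
      map_zero' := rfl
      map_add' := fun _ _ => rfl }
  letI : IsScalarTower K ↥L FF := IsScalarTower.of_algebraMap_eq (fun x => rfl)
  have htower : Module.finrank K ↥L * Module.finrank ↥L FF = Module.finrank K FF :=
    Module.finrank_mul_finrank K ↥L FF
  -- X is integral of degree ≤ 3 over K
  set P : Polynomial K := Polynomial.X^3 + Polynomial.C ⟨s, hsK⟩ * Polynomial.X^2
    + Polynomial.C (⟨s, hsK⟩+1) * Polynomial.X + 1 with hP
  have hmon : P.Monic := by
    unfold P
    monicity!
  have heval : Polynomial.aeval (RatFunc.X : FF) P = 0 := by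
    have hrel := s_rel s hs
    simp only [hP, map_add, map_mul, map_pow, map_one, Polynomial.aeval_X, Polynomial.aeval_C]
    have h1 : (algebraMap ↥K FF) ⟨s, hsK⟩ = s := rfl
    have h2 : (algebraMap ↥K FF) (⟨s, hsK⟩ + 1) = s + 1 := by
      rw [map_add, map_one, h1]
    linear_combination hrel + (RatFunc.X^3 + RatFunc.X + 1 : FF) * two_eq_zero + (RatFunc.X + RatFunc.X^2 : FF) * h1
  have hint : IsIntegral ↥K (RatFunc.X : FF) := ⟨P, hmon, heval⟩
  have hPdeg : P.natDegree = 3 := by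
    unfold P
    compute_degree!
  have hdeg : (minpoly ↥K (RatFunc.X : FF)).natDegree ≤ 3 := by
    rw [← hPdeg]
    exact Polynomial.natDegree_le_of_dvd (minpoly.dvd _ _ heval) hmon.ne_zero
  -- K⟮X⟯ = ⊤
  have htop : K⟮(RatFunc.X : FF)⟯ = ⊤ := by
    rw [eq_top_iff]
    intro f _
    induction f using RatFunc.induction_on with
    | f p q hq =>
      have hpoly : ∀ r : Polynomial (ZMod 2),
          algebraMap (Polynomial (ZMod 2)) FF r ∈ K⟮(RatFunc.X : FF)⟯ := by
        intro r
        induction r using Polynomial.induction_on' with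
        | add p q hp hq => rw [map_add]; exact add_mem hp hq
        | monomial n c =>
          rw [← Polynomial.C_mul_X_pow_eq_monomial, map_mul, map_pow,
            RatFunc.algebraMap_C, RatFunc.algebraMap_X]
          apply mul_mem
          · have : (RatFunc.C c : FF) = algebraMap ↥K FF (algebraMap (ZMod 2) ↥K c) := by
              rw [← IsScalarTower.algebraMap_apply, RatFunc.algebraMap_eq_C]
            rw [this]
            exact IntermediateField.algebraMap_mem _ _
          · exact pow_mem (IntermediateField.mem_adjoin_simple_self ↥K _) n
      exact div_mem (hpoly p) (hpoly q)
  haveI hfd1 : FiniteDimensional ↥K K⟮(RatFunc.X : FF)⟯ :=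
    IntermediateField.adjoin.finiteDimensional hint
  haveI hfdtop : FiniteDimensional ↥K (⊤ : IntermediateField ↥K FF) := htop ▸ hfd1
  haveI hfd : FiniteDimensional ↥K FF :=
    LinearEquiv.finiteDimensional (IntermediateField.topEquiv (F := ↥K) (E := FF)).toLinearEquiv
  have hfr : Module.finrank ↥K FF ≤ 3 := by
    have he : Module.finrank ↥K FF = Module.finrank ↥K K⟮(RatFunc.X : FF)⟯ := by
      rw [htop]
      exact ((IntermediateField.topEquiv (F := ↥K) (E := FF)).toLinearEquiv.finrank_eq).symm
    rw [he, IntermediateField.adjoin.finrank hint]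
    exact hdeg
  have hpos : 0 < Module.finrank ↥K FF := Module.finrank_pos
  have h1 : Module.finrank ↥K ↥L = 1 := by
    rw [hrank] at htower
    omega
  -- conclude
  haveI : FiniteDimensional ↥K ↥L := FiniteDimensional.of_injective
    ({ toFun := fun x => (x : FF)
       map_add' := fun _ _ => rfl
       map_smul' := fun k x => rfl } : ↥L →ₗ[↥K] FF)
    (fun a b h => Subtype.ext h)
  have hspan : (⊤ : Submodule ↥K ↥L) = Submodule.span ↥K {(1 : ↥L)} :=
    (Submodule.eq_top_of_finrank_eq (by rw [finrank_span_singleton one_ne_zero, h1])).symm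
  have hmem : (⟨a, hmemL a hfa⟩ : ↥L) ∈ Submodule.span ↥K {(1 : ↥L)} := by
    rw [← hspan]; trivial
  obtain ⟨c, hc⟩ := Submodule.mem_span_singleton.1 hmem
  have : a = (c : FF) := by
    have := congrArg (fun x : ↥L => (x : FF)) hc
    simp only at this
    rw [← this]
    show ((c • (1 : ↥L) : ↥L) : FF) = (c : FF)
    have : c • (1 : ↥L) = (algebraMap ↥K ↥L c) * 1 := Algebra.smul_def c 1
    rw [this, mul_one]
    rfl
  rw [this]
  exact c.2
end Artin

namespace OrePoly

variable {F : Type*} [Field F] (σ : F →+* F)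

local notation "LL" => Module.toAddMonoidEnd F (ℕ →₀ F)

lemma end_mul_apply (f g : AddMonoid.End (ℕ →₀ F)) (x : ℕ →₀ F) : (f * g) x = f (g x) := rfl

lemma L_apply (a : F) (f : ℕ →₀ F) : LL a f = a • f := rfl

lemma oreX_apply_single (m : ℕ) (c : F) :
    OreX σ (Finsupp.single m c) = Finsupp.single (m + 1) (σ c) := by
  show Finsupp.mapDomain (· + 1) (Finsupp.mapRange σ (map_zero σ) (Finsupp.single m c))
      = Finsupp.single (m + 1) (σ c)
  rw [Finsupp.mapRange_single, Finsupp.mapDomain_single]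

lemma ringHom_pow_succ (k : ℕ) (c : F) : (σ ^ (k + 1)) c = (σ ^ k) (σ c) := by
  rw [pow_succ]; rfl

lemma ringHom_pow_succ' (k : ℕ) (c : F) : (σ ^ (k + 1)) c = σ ((σ ^ k) c) := by
  rw [pow_succ']; rfl

lemma oreX_pow_single (i : ℕ) : ∀ (m : ℕ) (c : F),
    ((OreX σ) ^ i) (Finsupp.single m c) = Finsupp.single (m + i) ((σ ^ i) c) := by
  induction i with
  | zero => intro m c; simp
  | succ k ih =>
    intro m c
    rw [pow_succ', end_mul_apply, ih, oreX_apply_single, add_assoc, ← ringHom_pow_succ']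

lemma L_smul_single (a : F) (m : ℕ) (c : F) :
    LL a (Finsupp.single m c) = Finsupp.single m (a * c) := by
  rw [L_apply, Finsupp.smul_single, smul_eq_mul]

lemma monomial_apply_single (a : F) (i m : ℕ) (c : F) :
    (LL a * (OreX σ) ^ i) (Finsupp.single m c) = Finsupp.single (m + i) (a * (σ ^ i) c) := by
  rw [end_mul_apply, oreX_pow_single, L_smul_single]

lemma oreX_mul_L (a : F) : OreX σ * LL a = LL (σ a) * OreX σ := by
  apply Finsupp.addHom_ext
  intro m c
  show OreX σ (LL a (Finsupp.single m c)) = (LL (σ a) * OreX σ) (Finsupp.single m c)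
  rw [L_smul_single, oreX_apply_single, end_mul_apply, oreX_apply_single, L_smul_single, map_mul]

lemma oreX_pow_mul_L (i : ℕ) (a : F) :
    (OreX σ) ^ i * LL a = LL ((σ ^ i) a) * (OreX σ) ^ i := by
  induction i with
  | zero => simp
  | succ k ih =>
    rw [pow_succ', mul_assoc, ih, ← mul_assoc, oreX_mul_L, mul_assoc, ← pow_succ',
      ← ringHom_pow_succ']

lemma monomial_mul_monomial (a b : F) (i j : ℕ) :
    (LL a * (OreX σ) ^ i) * (LL b * (OreX σ) ^ j)
      = LL (a * (σ ^ i) b) * (OreX σ) ^ (i + j) := by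
  rw [mul_assoc, ← mul_assoc ((OreX σ) ^ i), oreX_pow_mul_L, mul_assoc, ← pow_add,
    ← mul_assoc, ← map_mul]

/-- The standard representation `∑ i < n, aᵢ σ^i(·) x^i`. -/
def rep (a : ℕ → F) (n : ℕ) : AddMonoid.End (ℕ →₀ F) :=
  ∑ i ∈ Finset.range n, LL (a i) * (OreX σ) ^ i

/-- Predicate: `T` admits a standard representation. -/
def IsRep (T : AddMonoid.End (ℕ →₀ F)) : Prop := ∃ n a, T = rep σ a n

lemma isRep_monomial (c : F) (k : ℕ) : IsRep σ (LL c * (OreX σ) ^ k) := by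
  refine ⟨k + 1, fun t => if t = k then c else 0, ?_⟩
  rw [rep, Finset.sum_eq_single k]
  · rw [if_pos rfl]
  · intro i _ hik
    rw [if_neg hik, map_zero, zero_mul]
  · intro h
    exact absurd (Finset.self_mem_range_succ k) h

lemma rep_pad (a : ℕ → F) (n N : ℕ) (h : n ≤ N) :
    rep σ a n = rep σ (fun i => if i < n then a i else 0) N := by
  unfold rep
  rw [← Finset.sum_subset (Finset.range_subset_range.mpr h)]
  · exact Finset.sum_congr rfl fun i hi => by simp [Finset.mem_range.mp hi]
  · intro i _ hi
    have : ¬ i < n := by simpa using hi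
    simp [this]

lemma isRep_zero : IsRep σ 0 := ⟨0, fun _ => 0, by simp [rep]⟩

lemma isRep_one : IsRep σ 1 := by
  have := isRep_monomial σ 1 0
  rwa [pow_zero, mul_one, map_one] at this

lemma isRep_add {T U} (hT : IsRep σ T) (hU : IsRep σ U) : IsRep σ (T + U) := by
  obtain ⟨n, a, rfl⟩ := hT
  obtain ⟨m, b, rfl⟩ := hU
  refine ⟨max n m, fun i => (if i < n then a i else 0) + (if i < m then b i else 0), ?_⟩
  rw [rep_pad σ a n (max n m) (le_max_left _ _), rep_pad σ b m (max n m) (le_max_right _ _)]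
  unfold rep
  rw [← Finset.sum_add_distrib]
  exact Finset.sum_congr rfl fun i _ => by rw [map_add, add_mul]

lemma isRep_neg {T} (hT : IsRep σ T) : IsRep σ (-T) := by
  obtain ⟨n, a, rfl⟩ := hT
  refine ⟨n, fun i => -(a i), ?_⟩
  unfold rep
  simp only [map_neg, neg_mul]
  exact (Finset.sum_neg_distrib (G := AddMonoid.End (ℕ →₀ F)) _).symm

lemma isRep_sum {ι : Type*} (t : Finset ι) (f : ι → AddMonoid.End (ℕ →₀ F))
    (h : ∀ i ∈ t, IsRep σ (f i)) : IsRep σ (∑ i ∈ t, f i) :=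
  Finset.sum_induction f (IsRep σ) (fun _ _ => isRep_add σ) (isRep_zero σ) h

lemma isRep_mul {T U} (hT : IsRep σ T) (hU : IsRep σ U) : IsRep σ (T * U) := by
  obtain ⟨n, a, rfl⟩ := hT
  obtain ⟨m, b, rfl⟩ := hU
  unfold rep
  rw [Finset.sum_mul_sum]
  apply isRep_sum
  intro i _
  apply isRep_sum
  intro j _
  rw [monomial_mul_monomial]
  exact isRep_monomial σ _ _

lemma exists_rep (z : OreRing σ) : ∃ n a, (z : AddMonoid.End (ℕ →₀ F)) = rep σ a n := by
  let C : Subring (AddMonoid.End (ℕ →₀ F)) :=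
    { carrier := setOf (IsRep σ)
      zero_mem' := isRep_zero σ
      one_mem' := isRep_one σ
      add_mem' := fun h1 h2 => isRep_add σ h1 h2
      neg_mem' := fun h1 => isRep_neg σ h1
      mul_mem' := fun h1 h2 => isRep_mul σ h1 h2 }
  have hle : OreRing σ ≤ C := by
    apply Subring.closure_le.mpr
    rintro T (⟨a, rfl⟩ | rfl)
    · have := isRep_monomial σ a 0
      rwa [pow_zero, mul_one] at this
    · have := isRep_monomial σ 1 1
      rwa [pow_one, map_one, one_mul] at this
  exact hle z.2

lemma eval_sum_single (n : ℕ) (f : ℕ → ℕ) (hf : Function.Injective f) (g : ℕ → F) (k : ℕ) :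
    (∑ i ∈ Finset.range n, Finsupp.single (f i) (g i)) (f k) = if k < n then g k else 0 := by
  have h1 : ∀ i, (Finsupp.single (f i) (g i)) (f k) = if i = k then g i else 0 := by
    intro i
    rw [Finsupp.single_apply]
    by_cases h : i = k
    · rw [if_pos (by rw [h]), if_pos h]
    · rw [if_neg (fun hc => h (hf hc)), if_neg h]
  rw [Finsupp.finset_sum_apply]
  rw [Finset.sum_congr rfl fun i _ => h1 i]
  rw [Finset.sum_ite_eq' (Finset.range n) k g]
  simp [Finset.mem_range]

lemma rep_apply_single (a : ℕ → F) (n m : ℕ) (c : F) :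
    rep σ a n (Finsupp.single m c)
      = ∑ i ∈ Finset.range n, Finsupp.single (m + i) (a i * (σ ^ i) c) := by
  rw [rep]; erw [AddMonoidHom.finset_sum_apply]
  exact Finset.sum_congr rfl fun i _ => monomial_apply_single σ _ _ _ _

lemma rep_coeff (a : ℕ → F) (n m : ℕ) (c : F) (k : ℕ) :
    rep σ a n (Finsupp.single m c) (m + k) = if k < n then a k * (σ ^ k) c else 0 := by
  rw [rep_apply_single]
  exact eval_sum_single n (fun i => m + i) (fun i j h => Nat.add_left_cancel h) _ k

lemma coe_sum_monomials (n : ℕ) (a : ℕ → F) (e : ℕ → ℕ) :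
    ((∑ i ∈ Finset.range n, OreC σ (a i) * Orex σ ^ (e i) : OreRing σ) : AddMonoid.End (ℕ →₀ F))
      = ∑ i ∈ Finset.range n, LL (a i) * (OreX σ) ^ (e i) := by
  have h := map_sum ((OreRing σ).subtype) (fun i => OreC σ (a i) * Orex σ ^ (e i))
    (Finset.range n)
  rw [show ((OreRing σ).subtype) (∑ i ∈ Finset.range n, OreC σ (a i) * Orex σ ^ (e i))
      = ((∑ i ∈ Finset.range n, OreC σ (a i) * Orex σ ^ (e i) : OreRing σ) :
        AddMonoid.End (ℕ →₀ F)) from rfl] at h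
  rw [h]
  exact Finset.sum_congr rfl fun i _ => by
    rw [map_mul, map_pow]
    rfl

lemma central_sum (n : ℕ) (b : ℕ → F) (e : ℕ → ℕ)
    (hbfix : ∀ i, σ (b i) = b i) (hσe : ∀ i (c : F), (σ ^ (e i)) c = c) :
    ∀ y : OreRing σ, (∑ i ∈ Finset.range n, OreC σ (b i) * Orex σ ^ (e i)) * y
      = y * (∑ i ∈ Finset.range n, OreC σ (b i) * Orex σ ^ (e i)) := by
  intro y
  set Z : OreRing σ := ∑ i ∈ Finset.range n, OreC σ (b i) * Orex σ ^ (e i) with hZ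
  have hcoe : (Z : AddMonoid.End (ℕ →₀ F)) = ∑ i ∈ Finset.range n, LL (b i) * (OreX σ) ^ (e i) :=
    coe_sum_monomials σ n b e
  have key : ∀ T ∈ OreRing σ,
      (Z : AddMonoid.End (ℕ →₀ F)) * T = T * (Z : AddMonoid.End (ℕ →₀ F)) := by
    intro T hT
    induction hT using Subring.closure_induction with
    | mem T' hT' =>
      rcases hT' with ⟨c, rfl⟩ | rfl
      · rw [hcoe, Finset.sum_mul, Finset.mul_sum]
        apply Finset.sum_congr rfl
        intro i _
        rw [mul_assoc, oreX_pow_mul_L, hσe i c, ← mul_assoc, ← map_mul, mul_comm (b i) c,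
          map_mul, mul_assoc]
      · rw [hcoe, Finset.sum_mul, Finset.mul_sum]
        apply Finset.sum_congr rfl
        intro i _
        rw [← mul_assoc, oreX_mul_L, hbfix i, mul_assoc, mul_assoc, ← pow_succ, ← pow_succ']
    | zero => simp
    | one => simp
    | add x y _ _ h1 h2 => rw [mul_add, add_mul, h1, h2]
    | neg x _ h1 =>
      refine DFunLike.ext _ _ fun f => ?_
      have hf : (Z : AddMonoid.End (ℕ →₀ F)) (x f) = x ((Z : AddMonoid.End (ℕ →₀ F)) f) :=
        congrArg (fun T => T f) h1
      show (Z : AddMonoid.End (ℕ →₀ F)) (-(x f)) = -(x ((Z : AddMonoid.End (ℕ →₀ F)) f))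
      rw [map_neg, hf]
    | mul x y _ _ h1 h2 => rw [← mul_assoc, h1, mul_assoc, h2, mul_assoc]
  exact Subtype.ext (key y.1 y.2)

section
variable (hσ3 : ∀ c : F, σ (σ (σ c)) = c)

lemma pow3_apply (c : F) : (σ ^ 3) c = σ (σ (σ c)) := by
  rw [pow_succ', pow_succ', pow_succ', pow_zero]
  rfl

include hσ3

lemma pow3_fix : ∀ (q : ℕ) (c : F), (σ ^ (3 * q)) c = c := by
  intro q
  induction q with
  | zero => intro c; simp
  | succ k ih =>
    intro c
    have h : 3 * (k + 1) = 3 * k + 3 := by ring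
    rw [h, pow_add]
    have h2 : (σ ^ (3 * k) * σ ^ 3) c = (σ ^ (3 * k)) ((σ ^ 3) c) := rfl
    rw [h2, pow3_apply, hσ3, ih]

lemma pow_mod3 (k : ℕ) (c : F) : (σ ^ k) c = (σ ^ (k % 3)) c := by
  conv_lhs => rw [← Nat.div_add_mod k 3]
  rw [pow_add]
  have h2 : (σ ^ (3 * (k / 3)) * σ ^ (k % 3)) c = (σ ^ (3 * (k / 3))) ((σ ^ (k % 3)) c) := rfl
  rw [h2, pow3_fix σ hσ3]

end

lemma rep_eq_sum_of_three (a : ℕ → F) (n : ℕ) (h0 : ∀ i, i < n → ¬ (3 ∣ i) → a i = 0) :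
    rep σ a n = ∑ i ∈ Finset.range n,
      LL (if 3 * i < n then a (3 * i) else 0) * (OreX σ) ^ (3 * i) := by
  set b : ℕ → F := fun i => if 3 * i < n then a (3 * i) else 0 with hb
  set c : ℕ → F := fun i => if 3 ∣ i then b (i / 3) else 0 with hc
  have hcoef : ∀ i, (if i < n then a i else 0) = c i := by
    intro i
    by_cases hdvd : (3 : ℕ) ∣ i
    · obtain ⟨j, rfl⟩ := hdvd
      have hj : 3 * j / 3 = j := Nat.mul_div_cancel_left j (by norm_num)
      simp only [hc, hb, if_pos (dvd_mul_right 3 j), hj]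
    · have hczero : c i = 0 := by simp only [hc, if_neg hdvd]
      rw [hczero]
      by_cases hin : i < n
      · rw [if_pos hin, h0 i hin hdvd]
      · rw [if_neg hin]
  have step1 : rep σ a n = rep σ c (3 * n) := by
    rw [rep_pad σ a n (3 * n) (by omega)]
    unfold rep
    exact Finset.sum_congr rfl fun i _ => by rw [show ((fun j => if j < n then a j else 0) i) = c i from hcoef i]
  have step2 : rep σ c (3 * n) = ∑ i ∈ Finset.range n, LL (b i) * (OreX σ) ^ (3 * i) := by
    unfold rep
    rw [← Finset.sum_filter_of_ne (p := fun i => (3 : ℕ) ∣ i)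
      (f := fun i => LL (c i) * (OreX σ) ^ i) ?vanish]
    case vanish =>
      intro x _ hx
      by_contra hdvd
      exact hx (by simp only [hc, if_neg hdvd, map_zero, zero_mul])
    refine Finset.sum_bij' (fun i _ => i / 3) (fun j _ => 3 * j) ?_ ?_ ?_ ?_ ?_
    · intro i hi
      simp only [Finset.mem_filter, Finset.mem_range] at hi
      simp only [Finset.mem_range]
      omega
    · intro j hj
      simp only [Finset.mem_range] at hj
      simp only [Finset.mem_filter, Finset.mem_range]
      exact ⟨by omega, dvd_mul_right 3 j⟩
    · intro i hi
      simp only [Finset.mem_filter, Finset.mem_range] at hi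
      omega
    · intro j _
      omega
    · intro i hi
      simp only [Finset.mem_filter, Finset.mem_range] at hi
      obtain ⟨-, j, rfl⟩ := hi
      have hj : 3 * j / 3 = j := by omega
      rw [hj]
      congr 2
      simp only [hc]
      rw [if_pos (dvd_mul_right 3 j), hj]
  rw [step1, step2]

lemma cond_of_central (z : OreRing σ) (n : ℕ) (a : ℕ → F)
    (hz : (z : AddMonoid.End (ℕ →₀ F)) = rep σ a n)
    (hcen : ∀ y : OreRing σ, z * y = y * z) :
    (∀ (c : F) (k : ℕ), k < n → a k * (σ ^ k) c = c * a k) ∧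
    (∀ k, k < n → σ (a k) = a k) := by
  constructor
  · intro c k hk
    have h : (z : AddMonoid.End (ℕ →₀ F)) * LL c = LL c * (z : AddMonoid.End (ℕ →₀ F)) :=
      congrArg Subtype.val (hcen (OreC σ c))
    have happ := congrArg (fun T : AddMonoid.End (ℕ →₀ F) =>
      T (Finsupp.single 0 (1 : F)) (0 + k)) h
    rw [end_mul_apply, end_mul_apply, L_smul_single, mul_one, hz] at happ
    rw [rep_coeff, L_apply, Finsupp.smul_apply, rep_coeff, map_one, mul_one,
      smul_eq_mul, mul_ite, mul_zero] at happ
    rwa [if_pos hk, if_pos hk] at happ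
  · intro k hk
    have h : (z : AddMonoid.End (ℕ →₀ F)) * OreX σ = OreX σ * (z : AddMonoid.End (ℕ →₀ F)) :=
      congrArg Subtype.val (hcen (Orex σ))
    have happ := congrArg (fun T : AddMonoid.End (ℕ →₀ F) =>
      T (Finsupp.single 0 (1 : F)) (1 + k)) h
    rw [end_mul_apply, end_mul_apply, oreX_apply_single, map_one, hz] at happ
    rw [rep_coeff, rep_apply_single] at happ
    rw [map_sum] at happ
    have hsum : ∀ i, OreX σ (Finsupp.single (0 + i) (a i * (σ ^ i) 1))
        = Finsupp.single (1 + i) (σ (a i)) := by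
      intro i
      rw [oreX_apply_single, map_one, mul_one, show 0 + i + 1 = 1 + i by omega]
    rw [Finset.sum_congr rfl fun i _ => hsum i] at happ
    rw [eval_sum_single (F := F) n (fun i => 1 + i) (fun i j h => Nat.add_left_cancel h)
      (fun i => σ (a i)) k] at happ
    rw [map_one, mul_one] at happ
    rw [if_pos hk, if_pos hk] at happ
    exact happ.symm

end OrePoly

/-- The center of `R = 𝔽₂(t)[x;σ]` (where `σ(t) = (t+1)/t`) equals
`𝔽₂(s)[x³]`: an element of `R` is central if and only if it can be written as a finite
sum `Σᵢ aᵢ·x^{3i}` where every coefficient `aᵢ` lies in the subfield `𝔽₂(s)` of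
`𝔽₂(t)` generated by `s = (t³+t+1)/(t²+t)`. -/
theorem center_eq_invariant_subfield_adjoin_x_cubed
    (σ : RatFunc (ZMod 2) ≃+* RatFunc (ZMod 2))
    (hfix : ∀ c : ZMod 2, σ (RatFunc.C c) = RatFunc.C c)
    (hX : σ RatFunc.X = (RatFunc.X + 1) / RatFunc.X)
    (s : RatFunc (ZMod 2))
    (hs : s = (RatFunc.X ^ 3 + RatFunc.X + 1) / (RatFunc.X ^ 2 + RatFunc.X))
    (z : OreRing σ.toRingHom) :
    (∀ y : OreRing σ.toRingHom, z * y = y * z) ↔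
      ∃ (n : ℕ) (a : ℕ → RatFunc (ZMod 2)),
        (∀ i, a i ∈ IntermediateField.adjoin (ZMod 2) {s}) ∧
        z = ∑ i ∈ Finset.range n, OreC σ.toRingHom (a i) * Orex σ.toRingHom ^ (3 * i) := by
  have hσ3 : ∀ c : FF, σ.toRingHom (σ.toRingHom (σ.toRingHom c)) = c := sigma3_id σ hfix hX
  constructor
  · intro hcen
    obtain ⟨n, a, hz⟩ := OrePoly.exists_rep σ.toRingHom z
    obtain ⟨hC, hfixa⟩ := OrePoly.cond_of_central σ.toRingHom z n a hz hcen
    have h0 : ∀ i, i < n → ¬ ((3:ℕ) ∣ i) → a i = 0 := by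
      intro i hi hdvd
      by_contra ha
      have h1 := hC RatFunc.X i hi
      have hXfix : (σ.toRingHom ^ i) RatFunc.X = RatFunc.X :=
        mul_left_cancel₀ ha (h1.trans (mul_comm _ _))
      rw [OrePoly.pow_mod3 σ.toRingHom hσ3] at hXfix
      have h3 : i % 3 = 1 ∨ i % 3 = 2 := by omega
      rcases h3 with h | h
      · rw [h, pow_one] at hXfix
        exact sigma_X_ne σ hX hXfix
      · rw [h] at hXfix
        apply sigma2_X_ne σ hX
        calc σ (σ RatFunc.X) = (σ.toRingHom ^ 2) RatFunc.X := by rw [sq σ.toRingHom]; rfl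
          _ = RatFunc.X := hXfix
    refine ⟨n, fun i => if 3 * i < n then a (3 * i) else 0, ?_, ?_⟩
    · intro i
      dsimp only
      by_cases h : 3 * i < n
      · rw [if_pos h]
        exact fixed_mem_adjoin σ hfix hX s hs _ (hfixa (3 * i) h)
      · rw [if_neg h]
        exact zero_mem _
    · apply Subtype.ext
      rw [OrePoly.coe_sum_monomials σ.toRingHom n _ (fun i => 3 * i), hz,
        OrePoly.rep_eq_sum_of_three σ.toRingHom a n h0]
  · rintro ⟨n, b, hbK, rfl⟩
    exact OrePoly.central_sum σ.toRingHom n b (fun i => 3 * i)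
      (fun i => adjoin_fixed σ hfix hX s hs _ (hbK i))
      (fun i c => OrePoly.pow3_fix σ.toRingHom hσ3 i c)
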